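/- Let $f\colon\mathbb{R}\to\mathbb{R}$ be the continuous $2$-periodic function with $f(x)=|x|$ for $x\in[-1,1]$, and set $d_n=\tfrac12-\tfrac{1}{4n^{2}}$. Then $\frac{Mf(d_n)-Mf(1/2)}{\tfrac12-d_n}\to\tfrac13$ as $n\to\infty$, where $M$ is the Hardy–Littlewood maximal operator. -/

import Mathlib

open MeasureTheory Metric Set Filter

noncomputable def holderSemi {X : Type*} [MetricSpace X] (α : X → ℝ) (f : X → ℝ) : ℝ :=
  ⨆ p : {p : X × X // p.1 ≠ p.2}, |f p.1.1 - f p.1.2| / dist p.1.1 p.1.2 ^ α p.1.1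

noncomputable def holderNorm {X : Type*} [MetricSpace X] (α : X → ℝ) (f : X → ℝ) : ℝ :=
  (⨆ x, |f x|) + holderSemi α f

def MemVarHolder {X : Type*} [MetricSpace X] (α : X → ℝ) (f : X → ℝ) : Prop :=
  Continuous f ∧ BddAbove (Set.range fun x => |f x|) ∧
    BddAbove (Set.range fun p : {p : X × X // p.1 ≠ p.2} =>
      |f p.1.1 - f p.1.2| / dist p.1.1 p.1.2 ^ α p.1.1)

noncomputable def maxFunR (f : ℝ → ℝ) (x : ℝ) : ℝ :=
  ⨆ r : {r : ℝ // 0 < r}, (1 / (2 * r.1)) * ∫ t in x - r.1..x + r.1, |f t|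


section AuxF
variable {f : ℝ → ℝ}

private lemma f_reduce (hper : ∀ t, f (t + 2) = f t) (t : ℝ) :
    ∃ u : ℝ, u ∈ Set.Ico (0:ℝ) 2 ∧ f u = f t ∧ f (1 - u) = f (1 - t) := by
  have hp : Function.Periodic f 2 := hper
  refine ⟨t - (⌊t / 2⌋ : ℤ) * 2,
    ⟨Int.sub_floor_div_mul_nonneg t two_pos, Int.sub_floor_div_mul_lt t two_pos⟩,
    hp.sub_int_mul_eq _, ?_⟩
  have h : (1 : ℝ) - (t - (⌊t / 2⌋ : ℤ) * 2) = (1 - t) - ((-⌊t / 2⌋ : ℤ) : ℝ) * 2 := by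
    push_cast; ring
  rw [h, hp.sub_int_mul_eq]

private lemma f_on_01 (hval : ∀ x ∈ Set.Icc (-1 : ℝ) 1, f x = |x|)
    {t : ℝ} (h0 : 0 ≤ t) (h1 : t ≤ 1) : f t = t := by
  rw [hval t ⟨by linarith, h1⟩, abs_of_nonneg h0]

private lemma f_on_neg (hval : ∀ x ∈ Set.Icc (-1 : ℝ) 1, f x = |x|)
    {t : ℝ} (h0 : -1 ≤ t) (h1 : t ≤ 0) : f t = -t := by
  rw [hval t ⟨h0, by linarith⟩, abs_of_nonpos h1]

private lemma f_shift (hper : ∀ t, f (t + 2) = f t) (t : ℝ) : f t = f (t - 2) := by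
  have := hper (t - 2); rw [show t - 2 + 2 = t by ring] at this; exact this

private lemma f_on_12 (hper : ∀ t, f (t + 2) = f t) (hval : ∀ x ∈ Set.Icc (-1 : ℝ) 1, f x = |x|)
    {t : ℝ} (h0 : 1 ≤ t) (h1 : t ≤ 2) : f t = 2 - t := by
  rw [f_shift hper, hval (t - 2) ⟨by linarith, by linarith⟩, abs_of_nonpos (by linarith)]; ring

private lemma f_on_23 (hper : ∀ t, f (t + 2) = f t) (hval : ∀ x ∈ Set.Icc (-1 : ℝ) 1, f x = |x|)
    {t : ℝ} (h0 : 2 ≤ t) (h1 : t ≤ 3) : f t = t - 2 := by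
  rw [f_shift hper, hval (t - 2) ⟨by linarith, by linarith⟩, abs_of_nonneg (by linarith)]

private lemma f_on_neg2 (hper : ∀ t, f (t + 2) = f t) (hval : ∀ x ∈ Set.Icc (-1 : ℝ) 1, f x = |x|)
    {t : ℝ} (h0 : -2 ≤ t) (h1 : t ≤ -1) : f t = t + 2 := by
  rw [← hper t, hval (t + 2) ⟨by linarith, by linarith⟩, abs_of_nonneg (by linarith)]

private lemma f_bounds (hper : ∀ t, f (t + 2) = f t) (hval : ∀ x ∈ Set.Icc (-1 : ℝ) 1, f x = |x|)
    (t : ℝ) : 0 ≤ f t ∧ f t ≤ 1 := by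
  obtain ⟨u, ⟨hu0, hu2⟩, hu, -⟩ := f_reduce hper t
  rw [← hu]
  rcases le_or_gt u 1 with h | h
  · rw [f_on_01 hval hu0 h]; exact ⟨hu0, h⟩
  · rw [f_on_12 hper hval h.le hu2.le]; constructor <;> linarith

private lemma f_symm (hper : ∀ t, f (t + 2) = f t) (hval : ∀ x ∈ Set.Icc (-1 : ℝ) 1, f x = |x|)
    (t : ℝ) : f (1 - t) = 1 - f t := by
  obtain ⟨u, ⟨hu0, hu2⟩, hu, hu'⟩ := f_reduce hper t
  rw [← hu, ← hu']
  rcases le_or_gt u 1 with h | h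
  · rw [f_on_01 hval hu0 h, f_on_01 hval (by linarith) (by linarith)]
  · rw [f_on_12 hper hval h.le hu2.le, f_on_neg hval (by linarith) (by linarith)]; ring

end AuxF
section AuxI
variable {f : ℝ → ℝ}

private lemma int_lin (hf : Continuous f) {a b c0 c1 : ℝ} (hab : a ≤ b)
    (h : ∀ t ∈ Set.Icc a b, f t = c0 + c1 * t) :
    ∫ t in a..b, f t = c0 * (b - a) + c1 * ((b^2 - a^2)/2) := by
  rw [intervalIntegral.integral_congr (g := fun t => c0 + c1 * t)
      (by rw [Set.uIcc_of_le hab]; exact h)]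
  rw [intervalIntegral.integral_add (f := fun _ => c0) (g := fun x => c1 * x) intervalIntegrable_const
      ((continuous_const.mul continuous_id').intervalIntegrable _ _)]
  have hcm : (∫ x in a..b, c1 * x) = c1 * ∫ x in a..b, x :=
    intervalIntegral.integral_const_mul c1 _
  rw [hcm, integral_id, intervalIntegral.integral_const]
  simp only [smul_eq_mul, mul_one]
  ring

private lemma iJA (hf : Continuous f) (hval : ∀ x ∈ Set.Icc (-1 : ℝ) 1, f x = |x|)
    {a b : ℝ} (h0 : 0 ≤ a) (hab : a ≤ b) (h1 : b ≤ 1) :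
    ∫ t in a..b, f t = (b^2 - a^2)/2 := by
  rw [int_lin hf hab (c0 := 0) (c1 := 1)
      (fun t ht => by rw [f_on_01 hval (by linarith [ht.1]) (by linarith [ht.2])]; ring)]
  ring

private lemma iJB (hf : Continuous f) (hval : ∀ x ∈ Set.Icc (-1 : ℝ) 1, f x = |x|)
    {a b : ℝ} (h0 : -1 ≤ a) (hab : a ≤ b) (h1 : b ≤ 0) :
    ∫ t in a..b, f t = -((b^2 - a^2)/2) := by
  rw [int_lin hf hab (c0 := 0) (c1 := -1)
      (fun t ht => by rw [f_on_neg hval (by linarith [ht.1]) (by linarith [ht.2])]; ring)]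
  ring

private lemma iJC (hf : Continuous f) (hper : ∀ t, f (t + 2) = f t)
    (hval : ∀ x ∈ Set.Icc (-1 : ℝ) 1, f x = |x|)
    {a b : ℝ} (h0 : 1 ≤ a) (hab : a ≤ b) (h1 : b ≤ 2) :
    ∫ t in a..b, f t = 2*(b - a) - (b^2 - a^2)/2 := by
  rw [int_lin hf hab (c0 := 2) (c1 := -1)
      (fun t ht => by rw [f_on_12 hper hval (by linarith [ht.1]) (by linarith [ht.2])]; ring)]
  ring

private lemma iJD (hf : Continuous f) (hper : ∀ t, f (t + 2) = f t)
    (hval : ∀ x ∈ Set.Icc (-1 : ℝ) 1, f x = |x|)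
    {a b : ℝ} (h0 : 2 ≤ a) (hab : a ≤ b) (h1 : b ≤ 3) :
    ∫ t in a..b, f t = (b^2 - a^2)/2 - 2*(b - a) := by
  rw [int_lin hf hab (c0 := -2) (c1 := 1)
      (fun t ht => by rw [f_on_23 hper hval (by linarith [ht.1]) (by linarith [ht.2])]; ring)]
  ring

private lemma iJE (hf : Continuous f) (hper : ∀ t, f (t + 2) = f t)
    (hval : ∀ x ∈ Set.Icc (-1 : ℝ) 1, f x = |x|)
    {a b : ℝ} (h0 : -2 ≤ a) (hab : a ≤ b) (h1 : b ≤ -1) :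
    ∫ t in a..b, f t = 2*(b - a) + (b^2 - a^2)/2 := by
  rw [int_lin hf hab (c0 := 2) (c1 := 1)
      (fun t ht => by rw [f_on_neg2 hper hval (by linarith [ht.1]) (by linarith [ht.2])]; ring)]
  ring

private lemma int_ub (hf : Continuous f) (hper : ∀ t, f (t + 2) = f t)
    (hval : ∀ x ∈ Set.Icc (-1 : ℝ) 1, f x = |x|) {a b : ℝ} (hab : a ≤ b) :
    ∫ t in a..b, f t ≤ b - a := by
  calc ∫ t in a..b, f t ≤ ∫ _t in a..b, (1:ℝ) :=
        intervalIntegral.integral_mono_on hab (hf.intervalIntegrable _ _)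
          intervalIntegrable_const (fun x _ => (f_bounds hper hval x).2)
    _ = b - a := by simp

private lemma int_lb (hf : Continuous f) (hper : ∀ t, f (t + 2) = f t)
    (hval : ∀ x ∈ Set.Icc (-1 : ℝ) 1, f x = |x|) {a b : ℝ} (hab : a ≤ b) :
    0 ≤ ∫ t in a..b, f t :=
  intervalIntegral.integral_nonneg hab (fun x _ => (f_bounds hper hval x).1)

private lemma key_identity (hf : Continuous f) (hper : ∀ t, f (t + 2) = f t)
    (hval : ∀ x ∈ Set.Icc (-1 : ℝ) 1, f x = |x|) (ε r : ℝ) :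
    2 * ∫ t in (1/2 - ε - r)..(1/2 - ε + r), f t
      = 2 * r + (∫ t in (1/2 - ε - r)..(1/2 - ε - r + 2*ε), f t)
          - (∫ t in (1/2 - ε + r)..(1/2 - ε + r + 2*ε), f t) := by
  have hint : ∀ a b : ℝ, IntervalIntegrable f volume a b := fun a b => hf.intervalIntegrable a b
  set d : ℝ := 1/2 - ε with hd
  have h1 := intervalIntegral.integral_comp_sub_left (a := 1 - (d + r)) (b := 1 - (d - r)) f 1
  rw [sub_sub_cancel, sub_sub_cancel] at h1
  have h2 : (∫ x in (1 - (d + r))..(1 - (d - r)), f (1 - x))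
      = ∫ x in (1 - (d + r))..(1 - (d - r)), (1 - f x) :=
    intervalIntegral.integral_congr (fun x _ => f_symm hper hval x)
  have h3 : (∫ x in (1 - (d + r))..(1 - (d - r)), (1 - f x))
      = ((1 - (d - r)) - (1 - (d + r))) - ∫ x in (1 - (d + r))..(1 - (d - r)), f x := by
    rw [intervalIntegral.integral_sub intervalIntegrable_const (hint _ _)]
    simp
  have e1 : 1 - (d + r) = (d - r) + 2*ε := by rw [hd]; ring
  have e2 : 1 - (d - r) = (d + r) + 2*ε := by rw [hd]; ring
  have a1 : (∫ x in (d - r)..((d - r) + 2*ε), f x) + ∫ x in ((d - r) + 2*ε)..(d + r), f x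
      = ∫ x in (d - r)..(d + r), f x :=
    intervalIntegral.integral_add_adjacent_intervals (hint _ _) (hint _ _)
  have a2 : (∫ x in ((d - r) + 2*ε)..(d + r), f x) + ∫ x in (d + r)..((d + r) + 2*ε), f x
      = ∫ x in ((d - r) + 2*ε)..((d + r) + 2*ε), f x :=
    intervalIntegral.integral_add_adjacent_intervals (hint _ _) (hint _ _)
  rw [e1, e2] at h1 h2 h3
  have hL : ((d + r) + 2*ε) - ((d - r) + 2*ε) = 2 * r := by ring
  rw [hL] at h3
  have := h1.symm.trans (h2.trans h3)
  linarith
end AuxI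

section Core
variable {f : ℝ → ℝ}

set_option maxHeartbeats 1000000 in
private lemma delta_le (hf : Continuous f) (hper : ∀ t, f (t + 2) = f t)
    (hval : ∀ x ∈ Set.Icc (-1 : ℝ) 1, f x = |x|)
    {ε r : ℝ} (hε : 0 < ε) (hε8 : ε ≤ 1/8) (hr : 0 < r) :
    (∫ t in (1/2 - ε - r)..(1/2 - ε - r + 2*ε), f t)
      - (∫ t in (1/2 - ε + r)..(1/2 - ε + r + 2*ε), f t) ≤ 4*ε*r/3 := by
  have hint : ∀ a b : ℝ, IntervalIntegrable f volume a b := fun a b => hf.intervalIntegrable a b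
  set xm : ℝ := 1/2 - ε - r with hxm
  set xp : ℝ := 1/2 - ε + r with hxp
  rcases le_or_gt (3/2) r with hc | hc
  · have h1 : (∫ t in xm..(xm + 2*ε), f t) ≤ (xm + 2*ε) - xm :=
      int_ub hf hper hval (by linarith)
    have h2 : 0 ≤ ∫ t in xp..(xp + 2*ε), f t := int_lb hf hper hval (by linarith)
    nlinarith [mul_nonneg hε.le (show (0:ℝ) ≤ r - 3/2 by linarith)]
  rcases le_or_gt r (1/2 - ε) with h1 | h1
  · -- case (i)
    have em : (∫ t in xm..(xm + 2*ε), f t) = ((xm + 2*ε)^2 - xm^2)/2 :=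
      iJA hf hval (by rw [hxm]; linarith) (by linarith) (by rw [hxm]; linarith)
    have ep : (∫ t in xp..(xp + 2*ε), f t) = ((xp + 2*ε)^2 - xp^2)/2 :=
      iJA hf hval (by rw [hxp]; linarith) (by linarith) (by rw [hxp]; linarith)
    rw [em, ep, hxm, hxp]
    nlinarith [mul_pos hε hr]
  rcases le_or_gt r (1/2 + ε) with h2 | h2
  · -- case (ii)
    have em1 : (∫ t in xm..(0:ℝ), f t) = -(((0:ℝ)^2 - xm^2)/2) :=
      iJB hf hval (by rw [hxm]; linarith) (by rw [hxm]; linarith) le_rfl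
    have em2 : (∫ t in (0:ℝ)..(xm + 2*ε), f t) = ((xm + 2*ε)^2 - (0:ℝ)^2)/2 :=
      iJA hf hval le_rfl (by rw [hxm]; linarith) (by rw [hxm]; linarith)
    have sm := intervalIntegral.integral_add_adjacent_intervals
      (hint xm 0) (hint 0 (xm + 2*ε))
    rw [em1, em2] at sm
    have ep1 : (∫ t in xp..(1:ℝ), f t) = ((1:ℝ)^2 - xp^2)/2 :=
      iJA hf hval (by rw [hxp]; linarith) (by rw [hxp]; linarith) le_rfl
    have ep2 : (∫ t in (1:ℝ)..(xp + 2*ε), f t) = 2*((xp + 2*ε) - 1) - ((xp + 2*ε)^2 - 1^2)/2 :=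
      iJC hf hper hval le_rfl (by rw [hxp]; linarith) (by rw [hxp]; linarith)
    have sp := intervalIntegral.integral_add_adjacent_intervals
      (hint xp 1) (hint 1 (xp + 2*ε))
    rw [ep1, ep2] at sp
    rw [← sm, ← sp, hxm, hxp]
    nlinarith [mul_nonneg (show (0:ℝ) ≤ r - (1/2 - ε) by linarith)
        (show (0:ℝ) ≤ (1/2 + ε) - r by linarith), mul_pos hε hr]
  rcases le_or_gt r (3/2 - ε) with h3 | h3
  · -- case (iii)
    have em : (∫ t in xm..(xm + 2*ε), f t) = -(((xm + 2*ε)^2 - xm^2)/2) :=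
      iJB hf hval (by rw [hxm]; linarith) (by linarith) (by rw [hxm]; linarith)
    have ep : (∫ t in xp..(xp + 2*ε), f t) = 2*((xp + 2*ε) - xp) - ((xp + 2*ε)^2 - xp^2)/2 :=
      iJC hf hper hval (by rw [hxp]; linarith) (by linarith) (by rw [hxp]; linarith)
    rw [em, ep, hxm, hxp]
    nlinarith [mul_nonneg hε.le (show (0:ℝ) ≤ 3/2 - r by linarith)]
  · -- case (iv)
    have em1 : (∫ t in xm..(-1:ℝ), f t) = 2*((-1:ℝ) - xm) + ((-1:ℝ)^2 - xm^2)/2 :=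
      iJE hf hper hval (by rw [hxm]; linarith) (by rw [hxm]; linarith) le_rfl
    have em2 : (∫ t in (-1:ℝ)..(xm + 2*ε), f t) = -(((xm + 2*ε)^2 - (-1:ℝ)^2)/2) :=
      iJB hf hval le_rfl (by rw [hxm]; linarith) (by rw [hxm]; linarith)
    have sm := intervalIntegral.integral_add_adjacent_intervals
      (hint xm (-1)) (hint (-1) (xm + 2*ε))
    rw [em1, em2] at sm
    have ep1 : (∫ t in xp..(2:ℝ), f t) = 2*((2:ℝ) - xp) - ((2:ℝ)^2 - xp^2)/2 :=
      iJC hf hper hval (by rw [hxp]; linarith) (by rw [hxp]; linarith) le_rfl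
    have ep2 : (∫ t in (2:ℝ)..(xp + 2*ε), f t) = ((xp + 2*ε)^2 - (2:ℝ)^2)/2 - 2*((xp + 2*ε) - 2) :=
      iJD hf hper hval le_rfl (by rw [hxp]; linarith) (by rw [hxp]; linarith)
    have sp := intervalIntegral.integral_add_adjacent_intervals
      (hint xp 2) (hint 2 (xp + 2*ε))
    rw [ep1, ep2] at sp
    rw [← sm, ← sp, hxm, hxp]
    nlinarith [sq_nonneg (3*(3/2 + ε - r) - 4*ε), sq_nonneg ε, mul_pos hε hr]

private lemma avg_le (hf : Continuous f) (hper : ∀ t, f (t + 2) = f t)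
    (hval : ∀ x ∈ Set.Icc (-1 : ℝ) 1, f x = |x|)
    {ε r : ℝ} (hε : 0 < ε) (hε8 : ε ≤ 1/8) (hr : 0 < r) :
    1/(2*r) * ∫ t in (1/2 - ε - r)..(1/2 - ε + r), |f t| ≤ 1/2 + ε/3 := by
  have habs : (∫ t in (1/2 - ε - r)..(1/2 - ε + r), |f t|)
      = ∫ t in (1/2 - ε - r)..(1/2 - ε + r), f t :=
    intervalIntegral.integral_congr (fun t _ => abs_of_nonneg (f_bounds hper hval t).1)
  rw [habs]
  have hk := key_identity hf hper hval ε r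
  have hd := delta_le hf hper hval hε hε8 hr
  have hI : (∫ t in (1/2 - ε - r)..(1/2 - ε + r), f t) ≤ r + 2*ε*r/3 := by linarith
  calc 1/(2*r) * ∫ t in (1/2 - ε - r)..(1/2 - ε + r), f t
      ≤ 1/(2*r) * (r + 2*ε*r/3) := by
        apply mul_le_mul_of_nonneg_left hI (by positivity)
    _ = 1/2 + ε/3 := by field_simp

private lemma avg_lb (hf : Continuous f) (hper : ∀ t, f (t + 2) = f t)
    (hval : ∀ x ∈ Set.Icc (-1 : ℝ) 1, f x = |x|)
    {ε : ℝ} (hε : 0 < ε) (hε8 : ε ≤ 1/8) :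
    1/2 + ε/3 - ε^2
      ≤ 1/(2*(3/2 - ε)) * ∫ t in (1/2 - ε - (3/2 - ε))..(1/2 - ε + (3/2 - ε)), |f t| := by
  have habs : (∫ t in (1/2 - ε - (3/2 - ε))..(1/2 - ε + (3/2 - ε)), |f t|)
      = ∫ t in (1/2 - ε - (3/2 - ε))..(1/2 - ε + (3/2 - ε)), f t :=
    intervalIntegral.integral_congr (fun t _ => abs_of_nonneg (f_bounds hper hval t).1)
  rw [habs]
  have hk := key_identity hf hper hval ε (3/2 - ε)
  have e1 : (1/2 - ε - (3/2 - ε) : ℝ) = -1 := by ring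
  have e2 : (1/2 - ε + (3/2 - ε) : ℝ) = 2 - 2*ε := by ring
  rw [e1, e2] at hk ⊢
  rw [show (2 - 2*ε + 2*ε : ℝ) = 2 by ring] at hk
  have em : (∫ t in (-1:ℝ)..(-1 + 2*ε), f t) = -(((-1 + 2*ε)^2 - (-1:ℝ)^2)/2) :=
    iJB hf hval le_rfl (by linarith) (by linarith)
  have ep : (∫ t in (2 - 2*ε)..(2:ℝ), f t) = 2*((2:ℝ) - (2 - 2*ε)) - ((2:ℝ)^2 - (2 - 2*ε)^2)/2 :=
    iJC hf hper hval (by linarith) (by linarith) le_rfl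
  rw [em, ep] at hk
  have hI : (∫ t in (-1:ℝ)..(2 - 2*ε), f t) = 3/2 - 2*ε^2 := by linarith
  rw [hI]
  have h2r : (0:ℝ) < 2*(3/2 - ε) := by linarith
  rw [show 1/(2*(3/2 - ε)) * (3/2 - 2*ε^2) = (3/2 - 2*ε^2)/(2*(3/2 - ε)) by ring,
    le_div_iff₀ h2r]
  nlinarith [mul_nonneg (sq_nonneg ε) (show (0:ℝ) ≤ 5/3 - 2*ε by linarith)]

end Core

section MF
variable {f : ℝ → ℝ}

private lemma mf_ub (hf : Continuous f) (hper : ∀ t, f (t + 2) = f t)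
    (hval : ∀ x ∈ Set.Icc (-1 : ℝ) 1, f x = |x|)
    {ε : ℝ} (hε : 0 < ε) (hε8 : ε ≤ 1/8) :
    maxFunR f (1/2 - ε) ≤ 1/2 + ε/3 := by
  haveI : Nonempty {r : ℝ // 0 < r} := ⟨⟨1, one_pos⟩⟩
  exact ciSup_le fun r => avg_le hf hper hval hε hε8 r.2

private lemma mf_lb (hf : Continuous f) (hper : ∀ t, f (t + 2) = f t)
    (hval : ∀ x ∈ Set.Icc (-1 : ℝ) 1, f x = |x|)
    {ε : ℝ} (hε : 0 < ε) (hε8 : ε ≤ 1/8) :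
    1/2 + ε/3 - ε^2 ≤ maxFunR f (1/2 - ε) := by
  have hbdd : BddAbove (Set.range fun r : {r : ℝ // 0 < r} =>
      (1 / (2 * r.1)) * ∫ t in (1/2 - ε) - r.1..(1/2 - ε) + r.1, |f t|) := by
    refine ⟨1/2 + ε/3, ?_⟩
    rintro x ⟨r, rfl⟩
    exact avg_le hf hper hval hε hε8 r.2
  refine le_trans ?_ (le_ciSup hbdd ⟨3/2 - ε, by linarith⟩)
  exact avg_lb hf hper hval hε hε8

private lemma mf_half (hf : Continuous f) (hper : ∀ t, f (t + 2) = f t)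
    (hval : ∀ x ∈ Set.Icc (-1 : ℝ) 1, f x = |x|) :
    maxFunR f (1/2 : ℝ) = 1/2 := by
  haveI : Nonempty {r : ℝ // 0 < r} := ⟨⟨1, one_pos⟩⟩
  unfold maxFunR
  have h : ∀ r : {r : ℝ // 0 < r},
      (1 / (2 * r.1)) * ∫ t in (1/2 : ℝ) - r.1..(1/2 : ℝ) + r.1, |f t| = 1/2 := by
    intro r
    have habs : (∫ t in (1/2 : ℝ) - r.1..(1/2 : ℝ) + r.1, |f t|)
        = ∫ t in (1/2 : ℝ) - r.1..(1/2 : ℝ) + r.1, f t :=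
      intervalIntegral.integral_congr (fun t _ => abs_of_nonneg (f_bounds hper hval t).1)
    have hk := key_identity hf hper hval 0 r.1
    rw [show (1/2 - 0 - r.1 : ℝ) = 1/2 - r.1 by ring,
        show (1/2 - 0 + r.1 : ℝ) = 1/2 + r.1 by ring] at hk
    simp only [mul_zero, add_zero, intervalIntegral.integral_same] at hk
    have hI : (∫ t in (1/2 : ℝ) - r.1..(1/2 : ℝ) + r.1, f t) = r.1 := by linarith
    rw [habs, hI]
    have hr : (0:ℝ) < r.1 := r.2
    field_simp
  rw [funext h, ciSup_const]

end MF

/-- The difference quotient of `Mf` between `d_n = 1/2 - 1/(4n²)`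
and `1/2` converges to `1/3`. -/
theorem maximal_function_difference_quotient_limit
    (f : ℝ → ℝ) (hf : Continuous f) (hper : ∀ t, f (t + 2) = f t)
    (hval : ∀ x ∈ Set.Icc (-1 : ℝ) 1, f x = |x|) :
    Tendsto (fun n : ℕ =>
        (maxFunR f (1 / 2 - 1 / (4 * (n : ℝ) ^ 2)) - maxFunR f (1 / 2)) /
          (1 / 2 - (1 / 2 - 1 / (4 * (n : ℝ) ^ 2))))
      atTop (nhds (1 / 3)) := by
  have hq : ∀ᶠ n : ℕ in atTop,
      (1:ℝ)/3 - 1 / (4 * (n : ℝ) ^ 2) ≤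
        (maxFunR f (1 / 2 - 1 / (4 * (n : ℝ) ^ 2)) - maxFunR f (1 / 2)) /
          (1 / 2 - (1 / 2 - 1 / (4 * (n : ℝ) ^ 2)))
      ∧ (maxFunR f (1 / 2 - 1 / (4 * (n : ℝ) ^ 2)) - maxFunR f (1 / 2)) /
          (1 / 2 - (1 / 2 - 1 / (4 * (n : ℝ) ^ 2))) ≤ 1/3 := by
    filter_upwards [eventually_ge_atTop 2] with n hn
    have hn' : (2:ℝ) ≤ (n:ℝ) := by exact_mod_cast hn
    have hε : (0:ℝ) < 1 / (4 * (n : ℝ) ^ 2) := by positivity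
    have hε8 : 1 / (4 * (n : ℝ) ^ 2) ≤ 1/8 := by
      rw [div_le_div_iff₀ (by positivity) (by norm_num)]
      nlinarith
    have hden : (1/2 - (1/2 - 1 / (4 * (n : ℝ) ^ 2)) : ℝ) = 1 / (4 * (n : ℝ) ^ 2) := by ring
    rw [hden, mf_half hf hper hval]
    have hub := mf_ub hf hper hval hε hε8
    have hlb := mf_lb hf hper hval hε hε8
    constructor
    · rw [le_div_iff₀ hε]
      nlinarith [hlb]
    · rw [div_le_iff₀ hε]
      nlinarith [hub]
  have h0 : Tendsto (fun n : ℕ => 1 / (4 * (n : ℝ) ^ 2)) atTop (nhds 0) := by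
    have h1 : Tendsto (fun n : ℕ => 1/(n:ℝ)) atTop (nhds 0) :=
      tendsto_one_div_atTop_nhds_zero_nat
    apply tendsto_of_tendsto_of_tendsto_of_le_of_le' tendsto_const_nhds h1
    · filter_upwards [eventually_ge_atTop 1] with n hn
      positivity
    · filter_upwards [eventually_ge_atTop 1] with n hn
      have hn' : (1:ℝ) ≤ (n:ℝ) := by exact_mod_cast hn
      rw [div_le_div_iff₀ (by positivity) (by linarith)]
      nlinarith
  have tlow : Tendsto (fun n : ℕ => (1:ℝ)/3 - 1 / (4 * (n : ℝ) ^ 2)) atTop (nhds (1/3)) := by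
    simpa using tendsto_const_nhds.sub h0
  exact tendsto_of_tendsto_of_tendsto_of_le_of_le' tlow tendsto_const_nhds
    (hq.mono fun n h => h.1) (hq.mono fun n h => h.2)
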